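/- For every natural number p, Tr[B_p^3] = 2^{p+1} + 6·4^p, where B_p = A_p + A_p^T. -/

import Mathlib

open Matrix

/-- Index type for the recursively defined block matrices `A p`,
of cardinality `2 ^ p`. -/
def IdxA : ℕ → Type
  | 0 => Fin 1
  | p + 1 => IdxA p ⊕ IdxA p

instance instFintypeIdxA : ∀ p, Fintype (IdxA p)
  | 0 => inferInstanceAs (Fintype (Fin 1))
  | p + 1 => letI := instFintypeIdxA p; inferInstanceAs (Fintype (IdxA p ⊕ IdxA p))

instance instDecidableEqIdxA : ∀ p, DecidableEq (IdxA p)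
  | 0 => inferInstanceAs (DecidableEq (Fin 1))
  | p + 1 => letI := instDecidableEqIdxA p; inferInstanceAs (DecidableEq (IdxA p ⊕ IdxA p))

/-- `A 0` is the 1×1 matrix with single entry 1, and
`A (p+1) = [[A p, (A p)ᵀ], [0, A p]]` as a 2×2 block matrix. -/
def A : (p : ℕ) → Matrix (IdxA p) (IdxA p) ℤ
  | 0 => Matrix.of fun _ _ => (1 : ℤ)
  | p + 1 => Matrix.fromBlocks (A p) (A p)ᵀ 0 (A p)

/-- The symmetrized transfer matrix `B p = A p + (A p)ᵀ`. -/
def B (p : ℕ) : Matrix (IdxA p) (IdxA p) ℤ := A p + (A p)ᵀ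

lemma trace_fromBlocks' {m n : Type*} [Fintype m] [Fintype n]
    (A : Matrix m m ℤ) (B : Matrix m n ℤ) (C : Matrix n m ℤ) (D : Matrix n n ℤ) :
    Matrix.trace (Matrix.fromBlocks A B C D) = Matrix.trace A + Matrix.trace D := by
  simp [Matrix.trace, Matrix.diag, Fintype.sum_sum_type, Matrix.fromBlocks]

lemma A_succ (p : ℕ) : A (p+1) = Matrix.fromBlocks (A p) (A p)ᵀ 0 (A p) := rfl

lemma trA3 : ∀ p, Matrix.trace (A p * A p * A p) = 2 ^ p := by
  intro p
  induction p with
  | zero =>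
    show Matrix.trace (A 0 * A 0 * A 0) = 1
    decide
  | succ p ih =>
    show Matrix.trace (Matrix.fromBlocks (A p) (A p)ᵀ 0 (A p) * Matrix.fromBlocks (A p) (A p)ᵀ 0 (A p) * Matrix.fromBlocks (A p) (A p)ᵀ 0 (A p)) = 2 ^ (p + 1)
    rw [Matrix.fromBlocks_multiply, Matrix.fromBlocks_multiply,
      trace_fromBlocks']
    simp only [Matrix.mul_zero, Matrix.zero_mul, add_zero, zero_add]
    rw [ih]; ring

lemma trA2At : ∀ p, Matrix.trace (A p * A p * (A p)ᵀ) = 4 ^ p := by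
  intro p
  induction p with
  | zero =>
    show Matrix.trace (A 0 * A 0 * (A 0)ᵀ) = 1
    decide
  | succ p ih =>
    show Matrix.trace (Matrix.fromBlocks (A p) (A p)ᵀ 0 (A p) * Matrix.fromBlocks (A p) (A p)ᵀ 0 (A p) * (Matrix.fromBlocks (A p) (A p)ᵀ 0 (A p))ᵀ) = 4 ^ (p + 1)
    rw [Matrix.fromBlocks_transpose, Matrix.fromBlocks_multiply,
      Matrix.fromBlocks_multiply, trace_fromBlocks']
    simp only [Matrix.mul_zero, Matrix.zero_mul, add_zero, zero_add,
      Matrix.transpose_zero, Matrix.transpose_transpose, Matrix.mul_add,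
      Matrix.add_mul, Matrix.trace_add]
    rw [Matrix.trace_mul_comm (A p * (A p)ᵀ) (A p), ← mul_assoc,
        mul_assoc ((A p)ᵀ) (A p) (A p),
        Matrix.trace_mul_comm ((A p)ᵀ) (A p * A p), ih]
    ring

theorem trace_B_cube (p : ℕ) :
    Matrix.trace ((B p) ^ 3) = 2 ^ (p + 1) + 6 * 4 ^ p := by
  have hAt3 : Matrix.trace ((A p)ᵀ * (A p)ᵀ * (A p)ᵀ) = 2 ^ p := by
    rw [← Matrix.transpose_mul, ← Matrix.transpose_mul, Matrix.trace_transpose,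
      ← mul_assoc, trA3]
  have h1 : Matrix.trace (A p * (A p)ᵀ * A p) = 4 ^ p := by
    rw [Matrix.trace_mul_comm (A p * (A p)ᵀ) (A p), ← mul_assoc, trA2At]
  have h2 : Matrix.trace ((A p)ᵀ * A p * A p) = 4 ^ p := by
    rw [mul_assoc, Matrix.trace_mul_comm ((A p)ᵀ) (A p * A p), trA2At]
  have h3 : Matrix.trace (A p * (A p)ᵀ * (A p)ᵀ) = 4 ^ p := by
    have : A p * (A p)ᵀ * (A p)ᵀ = (A p * A p * (A p)ᵀ)ᵀ := by
      simp [Matrix.transpose_mul, mul_assoc]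
    rw [this, Matrix.trace_transpose, trA2At]
  have h4 : Matrix.trace ((A p)ᵀ * A p * (A p)ᵀ) = 4 ^ p := by
    rw [mul_assoc, Matrix.trace_mul_comm ((A p)ᵀ) (A p * (A p)ᵀ), h3]
  have h5 : Matrix.trace ((A p)ᵀ * (A p)ᵀ * A p) = 4 ^ p := by
    rw [Matrix.trace_mul_comm ((A p)ᵀ * (A p)ᵀ) (A p), ← mul_assoc, h3]
  have hexp : (B p) ^ 3 =
      A p * A p * A p + A p * A p * (A p)ᵀ + A p * (A p)ᵀ * A p +
      A p * (A p)ᵀ * (A p)ᵀ + (A p)ᵀ * A p * A p + (A p)ᵀ * A p * (A p)ᵀ +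
      (A p)ᵀ * (A p)ᵀ * A p + (A p)ᵀ * (A p)ᵀ * (A p)ᵀ := by
    rw [B, pow_succ, pow_two]
    noncomm_ring
  rw [hexp]
  simp only [Matrix.trace_add]
  rw [trA3, trA2At, h1, h2, h3, h4, h5, hAt3]
  ring
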